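/- An aggregate allocation x is PI-rationalizable (i.e., there exists a type-homogeneous strict preference profile making x Pareto efficient and individually rational) if and only if the aggregate allocation graph AG is acyclic. -/

import Mathlib

open List Relation

lemma path_lemma {α : Type*} {r : α → α → Prop} {a b : α} (h : Relation.ReflTransGen r a b) :
    ∃ l : List α, List.Chain r a l ∧ (a :: l).Nodup ∧ (a :: l).getLast? = some b := by
  induction h using Relation.ReflTransGen.head_induction_on with
  | refl => exact ⟨[], List.Chain.nil, List.nodup_singleton b, rfl⟩
  | @head a c hac hcb ih =>
    obtain ⟨l, hchain, hnd, hlast⟩ := ih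
    by_cases hmem : a ∈ c :: l
    · obtain ⟨l₁, l₂, heq⟩ := List.append_of_mem hmem
      refine ⟨l₂, ?_, ?_, ?_⟩
      · have h1 : List.Chain' r (c :: l) := hchain
        rw [heq] at h1
        exact (List.isChain_split.mp h1).2
      · have := hnd
        rw [heq] at this
        exact this.sublist (List.sublist_append_right l₁ (a :: l₂))
      · rw [heq] at hlast
        rwa [List.getLast?_append_of_ne_nil l₁ (List.cons_ne_nil a l₂)] at hlast
    · exact ⟨c :: l, List.chain_cons.mpr ⟨hac, hchain⟩, List.nodup_cons.mpr ⟨hmem, hnd⟩,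
        by rw [List.getLast?_cons_cons]; exact hlast⟩

lemma cycle_lemma {α : Type*} {r : α → α → Prop} {a : α} (h : Relation.TransGen r a a) :
    ∃ (n : ℕ) (f : Fin (n + 1) → α), Function.Injective f ∧ ∀ k, r (f k) (f (k + 1)) := by
  obtain ⟨b, hab, hba⟩ := Relation.TransGen.tail'_iff.mp h
  obtain ⟨l, hchain, hnd, hlast⟩ := path_lemma hab
  set L := a :: l with hL
  have hlen : L.length = l.length + 1 := rfl
  refine ⟨l.length, fun k => L.get ⟨k.val, by omega⟩, ?_, ?_⟩
  · intro k k' he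
    have := List.nodup_iff_injective_get.mp hnd he
    exact Fin.ext (congrArg Fin.val this)
  · intro k
    rcases lt_or_eq_of_le (Nat.lt_succ_iff.mp k.isLt) with hk | hk
    · have hv : ((k + 1 : Fin (l.length + 1))).val = k.val + 1 := by
        rw [Fin.val_add_one_of_lt]
        exact Fin.lt_iff_val_lt_val.mpr (by simpa using hk)
      have hch' : List.Chain' r L := hchain
      have := List.isChain_iff_getElem.mp hch' k.val (by simp [hlen]; omega)
      convert this using 2
      all_goals (dsimp only; simp only [List.get_eq_getElem, hv])
    · have hk1 : k = Fin.last l.length := Fin.ext hk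
      have h0 : (k + 1 : Fin (l.length + 1)) = 0 := by rw [hk1, Fin.last_add_one]
      have hb' : L.get ⟨k.val, by omega⟩ = b := by
        have hne : L ≠ [] := List.cons_ne_nil a l
        have := List.getLast?_eq_getLast_of_ne_nil hne
        rw [this] at hlast
        have hlast2 : L.getLast hne = b := Option.some_injective _ hlast
        rw [← hlast2, List.getLast_eq_getElem]
        simp [hlen, hk]
      have ha' : L.get ⟨(0 : Fin (l.length + 1)).val, by omega⟩ = a := rfl
      simp only [h0]
      rw [hb', ha']
      exact hba

/-- an aggregate allocation is PI-rationalizable if and only if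
its aggregate allocation graph is acyclic. -/
theorem stmt_9 {I H T : Type*} [Fintype I] [Fintype H]
    (τ : I → T) (x ω : I → H) :
    (∃ P : T → H → H → Prop,
      (∀ t : T, ∀ a b : H, P t a b → ¬ P t b a) ∧
      (∀ t : T, ∀ a b c : H, P t a b → P t b c → P t a c) ∧
      (∀ t : T, ∀ a b : H, a ≠ b → P t a b ∨ P t b a) ∧
      (∀ i : I, x i = ω i ∨ P (τ i) (x i) (ω i)) ∧
      (¬ ∃ σ : Equiv.Perm I,
        (∀ i : I, x (σ i) = x i ∨ P (τ i) (x (σ i)) (x i)) ∧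
        (∃ i : I, P (τ i) (x (σ i)) (x i)))) ↔
    (∀ h : H, ¬ Relation.TransGen
      (fun h h' : H => ∃ i j : I, τ i = τ j ∧ ω j = h ∧ x j = h' ∧ h' ≠ h ∧ x i = h)
      h h) := by
  classical
  set R : H → H → Prop :=
    fun h h' : H => ∃ i j : I, τ i = τ j ∧ ω j = h ∧ x j = h' ∧ h' ≠ h ∧ x i = h with hRdef
  constructor
  · rintro ⟨P, hasym, htrans, htotal, hIR, heff⟩ h hcyc
    obtain ⟨n, f, hfinj, hedge⟩ := cycle_lemma hcyc
    have hch : ∀ k : Fin (n + 1), ∃ i : I, x i = f k ∧ P (τ i) (f (k + 1)) (f k) := by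
      intro k
      obtain ⟨i, j, hij, hωj, hxj, hne, hxi⟩ := hedge k
      rcases hIR j with h0 | h0
      · rw [hxj, hωj] at h0; exact absurd h0 hne
      · rw [hxj, hωj] at h0
        exact ⟨i, hxi, by rw [hij]; exact h0⟩
    choose g hgx hgP using hch
    have ginj : Function.Injective g := fun k k' he => hfinj (by rw [← hgx, ← hgx, he])
    set emb : Fin (n + 1) ↪ I := ⟨g, ginj⟩ with hemb
    set σ : Equiv.Perm I := (finRotate (n + 1)).viaEmbedding emb with hσ
    have hσg : ∀ k, σ (g k) = g (k + 1) := by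
      intro k
      have := Equiv.Perm.viaEmbedding_apply (finRotate (n + 1)) emb k
      simpa [hemb] using this
    apply heff
    refine ⟨σ, ?_, ⟨g 0, ?_⟩⟩
    · intro i
      by_cases hi : i ∈ Set.range g
      · obtain ⟨k, rfl⟩ := hi
        right
        rw [hσg k, hgx, hgx]
        exact hgP k
      · left
        rw [Equiv.Perm.viaEmbedding_apply_of_notMem (finRotate (n + 1)) emb i hi]
    · rw [hσg 0, hgx, hgx]
      exact hgP 0
  · intro hacyc
    set r₀ : H → H → Prop := fun a b => a = b ∨ Relation.TransGen R a b with hr₀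
    haveI : IsPartialOrder H r₀ :=
      { refl := fun a => Or.inl rfl
        trans := by
          rintro a b c (rfl | hab) (rfl | hbc)
          · exact Or.inl rfl
          · exact Or.inr hbc
          · exact Or.inr hab
          · exact Or.inr (hab.trans hbc)
        antisymm := by
          intro a b hab hba
          rcases hab with rfl | hab
          · rfl
          · rcases hba with rfl | hba
            · rfl
            · exact absurd (hab.trans hba) (hacyc a) }
    obtain ⟨s, hlin, hsub⟩ := extend_partialOrder r₀
    haveI := hlin
    have hRs : ∀ {a b : H}, R a b → s a b ∧ b ≠ a := by
      intro a b hab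
      refine ⟨hsub a b (Or.inr (Relation.TransGen.single hab)), ?_⟩
      obtain ⟨i, j, _, _, _, hne, _⟩ := hab
      exact hne
    set held : T → H → Prop := fun t h => ∃ i, τ i = t ∧ x i = h with hheld
    refine ⟨fun t a b => (held t a ∧ ¬ held t b) ∨ ((held t a ↔ held t b) ∧ s b a ∧ a ≠ b),
      ?_, ?_, ?_, ?_, ?_⟩
    · rintro t a b (⟨ha, hnb⟩ | ⟨hiff, hsba, hne⟩) (⟨hb, hna⟩ | ⟨hiff', hsab, hne'⟩)
      · exact hnb hb
      · exact hnb (hiff'.mpr ha)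
      · exact hna (hiff.mpr hb)
      · exact hne (antisymm_of s hsab hsba)
    · rintro t a b c (⟨ha, hnb⟩ | ⟨hiffab, hsba, hneab⟩) (⟨hb, hnc⟩ | ⟨hiffbc, hscb, hnebc⟩)
      · exact absurd hb hnb
      · exact Or.inl ⟨ha, fun hc => hnb (hiffbc.mpr hc)⟩
      · exact Or.inl ⟨hiffab.mpr hb, hnc⟩
      · refine Or.inr ⟨hiffab.trans hiffbc, trans_of s hscb hsba, ?_⟩
        rintro rfl
        exact hneab (antisymm_of s hsba hscb).symm
    · intro t a b hne
      by_cases ha : held t a <;> by_cases hb : held t b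
      · rcases total_of s a b with hs | hs
        · exact Or.inr (Or.inr ⟨iff_of_true hb ha, hs, hne.symm⟩)
        · exact Or.inl (Or.inr ⟨iff_of_true ha hb, hs, hne⟩)
      · exact Or.inl (Or.inl ⟨ha, hb⟩)
      · exact Or.inr (Or.inl ⟨hb, ha⟩)
      · rcases total_of s a b with hs | hs
        · exact Or.inr (Or.inr ⟨iff_of_false hb ha, hs, hne.symm⟩)
        · exact Or.inl (Or.inr ⟨iff_of_false ha hb, hs, hne⟩)
    · intro i
      by_cases he : x i = ω i
      · exact Or.inl he
      · refine Or.inr ?_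
        have hxa : held (τ i) (x i) := ⟨i, rfl, rfl⟩
        by_cases hw : held (τ i) (ω i)
        · obtain ⟨i', hτ', hx'⟩ := hw
          have hRe : R (ω i) (x i) := ⟨i', i, hτ', rfl, rfl, he, hx'⟩
          exact Or.inr ⟨iff_of_true hxa ⟨i', hτ', hx'⟩, (hRs hRe).1, he⟩
        · exact Or.inl ⟨hxa, hw⟩
    · rintro ⟨σ, hweak, i₀, hstrict⟩
      have key : ∀ i, s (x i) (x (σ i)) := by
        intro i
        rcases hweak i with he | hp
        · rw [he]; exact refl_of s _
        · rcases hp with ⟨_, hnx⟩ | ⟨_, hs, _⟩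
          · exact absurd ⟨i, rfl, rfl⟩ hnx
          · exact hs
      have keyne : x (σ i₀) ≠ x i₀ := by
        rcases hstrict with ⟨_, hnx⟩ | ⟨_, _, hne⟩
        · exact absurd ⟨i₀, rfl, rfl⟩ hnx
        · exact hne
      have hiter : ∀ (k : ℕ) (i : I), s (x i) (x ((σ ^ k) i)) := by
        intro k
        induction k with
        | zero => intro i; simpa using refl_of s (x i)
        | succ k ih =>
          intro i
          have h1 : (σ ^ (k + 1)) i = σ ((σ ^ k) i) := by
            rw [pow_succ', Equiv.Perm.mul_apply]
          rw [h1]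
          exact trans_of s (ih i) (key ((σ ^ k) i))
      have main : ∀ k l : ℕ, k < l → (σ ^ k) i₀ = (σ ^ l) i₀ → False := by
        intro k l hlt he
        have hcomm : σ ^ l = σ ^ k * σ ^ (l - k) := by
          rw [← pow_add]
          congr 1
          omega
        have hfix : (σ ^ (l - k)) i₀ = i₀ := by
          rw [hcomm, Equiv.Perm.mul_apply] at he
          exact ((σ ^ k).injective he).symm
        have hm1 : 1 ≤ l - k := by omega
        have h2 : (σ ^ (l - k - 1)) (σ i₀) = i₀ := by
          have : σ ^ (l - k) = σ ^ (l - k - 1) * σ := by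
            rw [← pow_succ]
            congr 1
            omega
          rw [this, Equiv.Perm.mul_apply] at hfix
          exact hfix
        have h3 : s (x (σ i₀)) (x i₀) := by
          have := hiter (l - k - 1) (σ i₀)
          rwa [h2] at this
        exact keyne (antisymm_of s h3 (key i₀))
      obtain ⟨k, l, hkl, hmap⟩ :=
        Finite.exists_ne_map_eq_of_infinite (fun k : ℕ => (σ ^ k) i₀)
      rcases hkl.lt_or_gt with hlt | hlt
      · exact main k l hlt hmap
      · exact main l k hlt hmap.symm
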